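/- Let d ≥ 1 and M > 0, and let Φ : ℂ^d → ℝ be a C² function (of the 2d real variables) all of whose second-order partial derivatives are bounded in absolute value by M on all of ℂ^d. For x = u+iv, define the holomorphic gradient (∂_x Φ)_j = ½(∂_{u_j} − i∂_{v_j})Φ. Then there exists a constant C > 0 depending only on d such that for every t₀ > 0 and all x, y ∈ ℂ^d, setting θ = (2/i)(∂_x Φ)((x+y)/2) + i·t₀·conj(x−y) ∈ ℂ^d, one has −Φ(x) + Re(i⟨x−y, θ⟩) + Φ(y) ≤ (C·M − t₀)·|x−y|². In particular, for t₀ > C·M the left-hand side is bounded above by a negative multiple of |x−y|². -/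

import Mathlib

open Matrix

noncomputable section

/-- The `j`-th component of the holomorphic gradient
`(∂_x Φ)_j = ½(∂_{u_j} - i ∂_{v_j})Φ` of a real-valued function `Φ` on `ℂ^d`,
computed via directional derivatives along the real and imaginary coordinate
directions. -/
def holGrad {d : ℕ} (Φ : (Fin d → ℂ) → ℝ) (x : Fin d → ℂ) (j : Fin d) : ℂ :=
  (1 / 2) *
    (((deriv (fun s : ℝ => Φ (x + (s : ℂ) • (Pi.single j (1 : ℂ) : Fin d → ℂ))) 0 : ℝ) : ℂ)
      - Complex.I *
        ((deriv (fun s : ℝ => Φ (x + (s : ℂ) • (Pi.single j Complex.I : Fin d → ℂ))) 0 : ℝ)))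

/-- The contour covector `θ = (2/i)(∂_x Φ)((x+y)/2) + i t₀ conj(x - y)`. -/
def theta15 {d : ℕ} (Φ : (Fin d → ℂ) → ℝ) (t₀ : ℝ) (x y : Fin d → ℂ) (j : Fin d) : ℂ :=
  (2 / Complex.I) * holGrad Φ ((2⁻¹ : ℂ) • (x + y)) j +
    Complex.I * (t₀ : ℂ) * (starRingEnd ℂ) ((x - y) j)

/-- Directional derivative along a complex-scaled real line equals the Fréchet
derivative applied to the direction. -/
lemma aux15_deriv_line {d : ℕ} (Φ : (Fin d → ℂ) → ℝ) (h : Differentiable ℝ Φ)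
    (x u : Fin d → ℂ) :
    deriv (fun s : ℝ => Φ (x + (s : ℂ) • u)) 0 = fderiv ℝ Φ x u := by
  have hg : HasDerivAt (fun s : ℝ => x + (s : ℂ) • u) u 0 := by
    have : (fun s : ℝ => x + (s : ℂ) • u) = fun s : ℝ => x + s • u := by
      funext s; rw [Complex.coe_smul]
    rw [this]
    simpa using (hasDerivAt_id (0:ℝ)).smul_const u |>.const_add x
  have hx : HasFDerivAt Φ (fderiv ℝ Φ x) ((fun s : ℝ => x + (s : ℂ) • u) 0) := by
    simpa using (h x).hasFDerivAt
  have := hx.comp_hasDerivAt (0:ℝ) hg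
  exact this.deriv

/-- The scalar identity behind the phase computation. -/
lemma aux15_scalar (z : ℂ) (A B t : ℝ) :
    (Complex.I * (z * ((2 / Complex.I) * ((1/2 : ℂ) * ((A:ℂ) - Complex.I * B)) +
      Complex.I * t * (starRingEnd ℂ) z))).re
      = z.re * A + z.im * B - t * ‖z‖ ^ 2 := by
  rw [show ‖z‖ ^ 2 = z.re^2 + z.im^2 by rw [Complex.sq_norm, Complex.normSq_apply]; ring]
  simp [Complex.div_re, Complex.div_im, Complex.mul_re, Complex.mul_im, Complex.add_re,
    Complex.add_im, Complex.normSq_apply]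
  ring

/-- Real decomposition of a vector in `ℂ^d` into coordinate directions. -/
lemma aux15_decomp {d : ℕ} (z : Fin d → ℂ) :
    z = ∑ j, ((z j).re • (Pi.single j (1:ℂ) : Fin d → ℂ)
        + (z j).im • (Pi.single j Complex.I : Fin d → ℂ)) := by
  funext k
  rw [Finset.sum_apply]
  have : ∀ j, ((z j).re • (Pi.single j (1:ℂ) : Fin d → ℂ)
        + (z j).im • (Pi.single j Complex.I : Fin d → ℂ)) k
      = if j = k then z j else 0 := by
    intro j
    by_cases h : j = k <;>
      simp [h, Pi.single_apply, Complex.real_smul, Complex.ext_iff]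
  rw [Finset.sum_congr rfl (fun j _ => this j)]
  simp

/-- Expansion of a continuous real-linear functional on `ℂ^d` along the
coordinate directions. -/
lemma aux15_lin_expand {d : ℕ} (L : (Fin d → ℂ) →L[ℝ] ℝ) (u : Fin d → ℂ) :
    L u = ∑ j, ((u j).re * L (Pi.single j (1:ℂ)) + (u j).im * L (Pi.single j Complex.I)) := by
  conv_lhs => rw [aux15_decomp u]
  simp [map_sum, map_add, _root_.map_smul, smul_eq_mul]

lemma aux15_lin_bound {d : ℕ} (L : (Fin d → ℂ) →L[ℝ] ℝ) (M : ℝ)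
    (hM : ∀ w : Fin d → ℂ, (∃ j : Fin d, w = (Pi.single j (1 : ℂ) : Fin d → ℂ) ∨
        w = (Pi.single j Complex.I : Fin d → ℂ)) → |L w| ≤ M) (v : Fin d → ℂ) :
    |L v| ≤ 2 * d * M * ‖v‖ := by
  rw [aux15_lin_expand]
  calc |∑ j, ((v j).re * L (Pi.single j (1:ℂ)) + (v j).im * L (Pi.single j Complex.I))|
      ≤ ∑ j, |(v j).re * L (Pi.single j (1:ℂ)) + (v j).im * L (Pi.single j Complex.I)| :=
        Finset.abs_sum_le_sum_abs _ _
    _ ≤ ∑ _j : Fin d, 2 * M * ‖v‖ := by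
        refine Finset.sum_le_sum fun j _ => ?_
        have h1 : |(v j).re| ≤ ‖v‖ :=
          le_trans (Complex.abs_re_le_norm _) (norm_le_pi_norm v j)
        have h2 : |(v j).im| ≤ ‖v‖ :=
          le_trans (Complex.abs_im_le_norm _) (norm_le_pi_norm v j)
        have hb1 : |L (Pi.single j (1:ℂ))| ≤ M := hM _ ⟨j, Or.inl rfl⟩
        have hb2 : |L (Pi.single j Complex.I)| ≤ M := hM _ ⟨j, Or.inr rfl⟩
        calc |(v j).re * L (Pi.single j (1:ℂ)) + (v j).im * L (Pi.single j Complex.I)|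
            ≤ |(v j).re| * |L (Pi.single j (1:ℂ))| + |(v j).im| * |L (Pi.single j Complex.I)| := by
              rw [← abs_mul, ← abs_mul]; exact abs_add_le _ _
          _ ≤ ‖v‖ * M + ‖v‖ * M :=
              add_le_add (mul_le_mul h1 hb1 (abs_nonneg _) (norm_nonneg _))
                (mul_le_mul h2 hb2 (abs_nonneg _) (norm_nonneg _))
          _ = 2 * M * ‖v‖ := by ring
    _ = 2 * d * M * ‖v‖ := by simp [Finset.sum_const]; ring

/-- Operator-norm bound for a continuous real-bilinear form on `ℂ^d` whose values
on coordinate directions are bounded by `M`. -/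
lemma aux15_bilin_opNorm {d : ℕ} (T : (Fin d → ℂ) →L[ℝ] ((Fin d → ℂ) →L[ℝ] ℝ)) (M : ℝ)
    (hM0 : 0 ≤ M)
    (hM : ∀ u v : Fin d → ℂ,
      (∃ j : Fin d, u = (Pi.single j (1 : ℂ) : Fin d → ℂ) ∨
          u = (Pi.single j Complex.I : Fin d → ℂ)) →
      (∃ j : Fin d, v = (Pi.single j (1 : ℂ) : Fin d → ℂ) ∨
          v = (Pi.single j Complex.I : Fin d → ℂ)) →
      |T u v| ≤ M) :
    ‖T‖ ≤ 4 * d^2 * M := by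
  refine ContinuousLinearMap.opNorm_le_bound _ (by positivity) fun u => ?_
  refine ContinuousLinearMap.opNorm_le_bound _ (by positivity) fun v => ?_
  have inner : ∀ v : Fin d → ℂ, |T.flip v u| ≤ 2 * d * (2 * d * M * ‖v‖) * ‖u‖ := by
    intro v
    refine aux15_lin_bound (T.flip v) _ (fun w hw => ?_) u
    have : |T w v| ≤ 2 * d * M * ‖v‖ :=
      aux15_lin_bound (T w) M (fun w' hw' => hM w w' hw hw') v
    simpa using this
  have hiv := inner v
  simp only [ContinuousLinearMap.flip_apply] at hiv
  rw [Real.norm_eq_abs]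
  calc |T u v| ≤ 2 * d * (2 * d * M * ‖v‖) * ‖u‖ := hiv
    _ = 4 * d^2 * M * ‖u‖ * ‖v‖ := by ring

/-- Second-order Taylor remainder bound from a Lipschitz bound on the derivative. -/
lemma aux15_taylor {d : ℕ} (Φ : (Fin d → ℂ) → ℝ) (hdiff : Differentiable ℝ Φ)
    (m : Fin d → ℂ) (K : ℝ) (hK : 0 ≤ K)
    (hlip : ∀ a b : Fin d → ℂ, ‖fderiv ℝ Φ a - fderiv ℝ Φ b‖ ≤ K * ‖a - b‖)
    (p : Fin d → ℂ) :
    |Φ p - Φ m - fderiv ℝ Φ m (p - m)| ≤ K * ‖p - m‖^2 := by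
  have hps : p ∈ Metric.closedBall m ‖p - m‖ := by
    simp [Metric.mem_closedBall, dist_eq_norm]
  have h := Convex.norm_image_sub_le_of_norm_fderiv_le' (f := Φ) (φ := fderiv ℝ Φ m)
    (s := Metric.closedBall m ‖p - m‖) (C := K * ‖p - m‖) (x := m) (y := p)
    (fun w _ => hdiff w)
    (fun w hw => by
      refine le_trans (hlip w m) ?_
      have : ‖w - m‖ ≤ ‖p - m‖ := by
        rw [Metric.mem_closedBall, dist_eq_norm] at hw; exact hw
      exact mul_le_mul_of_nonneg_left this hK)
    (convex_closedBall _ _)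
    (Metric.mem_closedBall_self (norm_nonneg _))
    hps
  rw [← Real.norm_eq_abs]
  calc ‖Φ p - Φ m - fderiv ℝ Φ m (p - m)‖ ≤ K * ‖p - m‖ * ‖p - m‖ := h
    _ = K * ‖p - m‖^2 := by ring

/-- Sup norm squared is bounded by the sum of squared moduli. -/
lemma aux15_norm_sq_le {d : ℕ} (z : Fin d → ℂ) :
    ‖z‖^2 ≤ ∑ j, ‖z j‖^2 := by
  set S := ∑ j, ‖z j‖^2 with hS
  have hS0 : 0 ≤ S := Finset.sum_nonneg fun i _ => by positivity
  have h1 : ‖z‖ ≤ Real.sqrt S := by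
    rw [pi_norm_le_iff_of_nonneg (Real.sqrt_nonneg _)]
    intro j
    rw [show ‖z j‖ = Real.sqrt (‖z j‖^2) from
        (Real.sqrt_sq (norm_nonneg _)).symm]
    exact Real.sqrt_le_sqrt (Finset.single_le_sum (f := fun j => ‖z j‖^2)
      (fun i _ => by positivity) (Finset.mem_univ j))
  calc ‖z‖^2 ≤ Real.sqrt S ^ 2 := pow_le_pow_left₀ (norm_nonneg _) h1 2
    _ = S := Real.sq_sqrt hS0

/-- Phase estimate for the shifted FBI contour: there is `C > 0`,
depending only on `d`, such that for every `C²` function `Φ : ℂ^d → ℝ` whose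
second-order partial derivatives (in the `2d` real variables) are bounded by `M`, every
`t₀ > 0` and all `x, y ∈ ℂ^d`, with `θ = (2/i)(∂_x Φ)((x+y)/2) + i t₀ conj(x-y)`, one has
`-Φ(x) + Re(i⟨x - y, θ⟩) + Φ(y) ≤ (C M - t₀)|x - y|²`. -/
theorem statement15 (d : ℕ) (hd : 1 ≤ d) :
    ∃ C : ℝ, 0 < C ∧
      ∀ (M : ℝ) (Φ : (Fin d → ℂ) → ℝ),
        ContDiff ℝ 2 Φ →
        (∀ (x : Fin d → ℂ) (u v : Fin d → ℂ),
          (∃ j : Fin d, u = (Pi.single j (1 : ℂ) : Fin d → ℂ) ∨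
              u = (Pi.single j Complex.I : Fin d → ℂ)) →
          (∃ j : Fin d, v = (Pi.single j (1 : ℂ) : Fin d → ℂ) ∨
              v = (Pi.single j Complex.I : Fin d → ℂ)) →
          |iteratedFDeriv ℝ 2 Φ x ![u, v]| ≤ M) →
        ∀ t₀ : ℝ, 0 < t₀ → ∀ x y : Fin d → ℂ,
          -Φ x + (Complex.I * ((x - y) ⬝ᵥ theta15 Φ t₀ x y)).re + Φ y ≤
            (C * M - t₀) * ∑ j, ‖(x - y) j‖ ^ 2 := by
  have hdpos : (0:ℝ) < d := by exact_mod_cast hd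
  refine ⟨2 * d^2, by positivity, ?_⟩
  intro M Φ hΦ hbound t₀ ht₀ x y
  have hdiff : Differentiable ℝ Φ := hΦ.differentiable (by norm_num)
  have hM0 : 0 ≤ M := le_trans (abs_nonneg _)
    (hbound x _ _ ⟨⟨0, hd⟩, Or.inl rfl⟩ ⟨⟨0, hd⟩, Or.inl rfl⟩)
  set z := x - y with hz
  set m := (2⁻¹ : ℂ) • (x + y) with hm
  set φ := fderiv ℝ Φ m with hφ
  set K := 4 * (d:ℝ)^2 * M with hK
  have hK0 : 0 ≤ K := by positivity
  set S := ∑ j, ‖z j‖^2 with hS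
  have hS0 : 0 ≤ S := Finset.sum_nonneg fun i _ => by positivity
  -- Step 1: the real-part identity
  have hg : ∀ j, holGrad Φ m j
      = (1/2 : ℂ) * (((φ (Pi.single j (1:ℂ)) : ℝ) : ℂ)
          - Complex.I * ((φ (Pi.single j Complex.I) : ℝ) : ℂ)) := by
    intro j
    rw [holGrad, aux15_deriv_line Φ hdiff, aux15_deriv_line Φ hdiff]
  have hRe : (Complex.I * (z ⬝ᵥ theta15 Φ t₀ x y)).re = φ z - t₀ * S := by
    have h1 : (Complex.I * (z ⬝ᵥ theta15 Φ t₀ x y)).re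
        = ∑ j, ((z j).re * φ (Pi.single j (1:ℂ))
            + (z j).im * φ (Pi.single j Complex.I) - t₀ * ‖z j‖^2) := by
      rw [dotProduct, Finset.mul_sum, Complex.re_sum]
      refine Finset.sum_congr rfl fun j _ => ?_
      rw [theta15, hg j]
      exact aux15_scalar (z j) _ _ t₀
    rw [h1, hS, Finset.sum_sub_distrib, ← Finset.mul_sum, aux15_lin_expand φ z]
  -- Step 2: second-derivative operator bound & Lipschitz derivative
  have hsec : ∀ w, ‖fderiv ℝ (fderiv ℝ Φ) w‖ ≤ K := by
    intro w
    refine aux15_bilin_opNorm _ M hM0 fun u v hu hv => ?_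
    have h2 := hbound w u v hu hv
    rwa [iteratedFDeriv_two_apply, show (![u, v] : Fin 2 → Fin d → ℂ) 0 = u from rfl,
      show (![u, v] : Fin 2 → Fin d → ℂ) 1 = v from rfl] at h2
  have hcd1 : Differentiable ℝ (fderiv ℝ Φ) :=
    (hΦ.fderiv_right (m := 1) (by norm_num)).differentiable one_ne_zero
  have hlip : ∀ a b : Fin d → ℂ, ‖fderiv ℝ Φ a - fderiv ℝ Φ b‖ ≤ K * ‖a - b‖ := by
    intro a b
    exact Convex.norm_image_sub_le_of_norm_fderiv_le (f := fderiv ℝ Φ) (s := Set.univ)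
      (fun w _ => hcd1 w) (fun w _ => hsec w) convex_univ (Set.mem_univ b) (Set.mem_univ a)
  -- Step 3: Taylor at the midpoint
  have hxm : x - m = (2⁻¹ : ℂ) • z := by
    funext j
    simp only [hm, hz, Pi.sub_apply, Pi.smul_apply, smul_eq_mul, Pi.add_apply]
    ring
  have hym : y - m = -((2⁻¹ : ℂ) • z) := by
    funext j
    simp only [hm, hz, Pi.sub_apply, Pi.smul_apply, smul_eq_mul, Pi.add_apply, Pi.neg_apply]
    ring
  have hhalf : ‖(2⁻¹ : ℂ) • z‖ = 2⁻¹ * ‖z‖ := by rw [norm_smul]; norm_num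
  have htx := aux15_taylor Φ hdiff m K hK0 hlip x
  have hty := aux15_taylor Φ hdiff m K hK0 hlip y
  rw [hxm, hhalf] at htx
  rw [hym] at hty
  rw [norm_neg, hhalf] at hty
  -- Step 4: combine
  have hφz : φ (x - m) - φ (y - m) = φ z := by
    rw [← map_sub]
    congr 1
    rw [hz]; abel
  rw [← hφ] at htx hty
  have hmain : -Φ x + φ z + Φ y ≤ K / 2 * ‖z‖^2 := by
    have h5 : φ ((2⁻¹ : ℂ) • z) - φ (-((2⁻¹ : ℂ) • z)) = φ z := by
      rw [← map_sub]
      congr 1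
      funext j
      simp only [Pi.sub_apply, Pi.smul_apply, Pi.neg_apply, smul_eq_mul]
      ring
    have e1 : -Φ x + φ z + Φ y
        = (Φ y - Φ m - φ (-((2⁻¹ : ℂ) • z))) - (Φ x - Φ m - φ ((2⁻¹ : ℂ) • z)) := by
      linarith [h5]
    rw [e1]
    have h4 : K * (2⁻¹ * ‖z‖)^2 = K / 4 * ‖z‖^2 := by ring
    linarith [(abs_le.mp htx).1, (abs_le.mp htx).2, (abs_le.mp hty).1, (abs_le.mp hty).2]
  have hnorm : ‖z‖^2 ≤ S := aux15_norm_sq_le z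
  have hfinal : -Φ x + φ z + Φ y ≤ 2 * (d:ℝ)^2 * M * S := by
    calc -Φ x + φ z + Φ y ≤ K / 2 * ‖z‖^2 := hmain
      _ ≤ K / 2 * S := by
          apply mul_le_mul_of_nonneg_left hnorm (by positivity)
      _ = 2 * (d:ℝ)^2 * M * S := by rw [hK]; ring
  rw [hRe]
  have : (2 * (d:ℝ)^2 * M - t₀) * S = 2 * (d:ℝ)^2 * M * S - t₀ * S := by ring
  rw [this]
  linarith
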